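/- For integers n ≥ k ≥ 4 and 1 ≤ a < k/2, the n-vertex graph H_{n,k,a} contains no cycle of length k or more. -/

import Mathlib

open SimpleGraph Finset

private lemma walk_stay {V : Type*} {G : SimpleGraph V} (P : V → Prop) :
    ∀ {x y : V} (w : G.Walk x y), P x → (∀ d ∈ w.darts, P d.fst → P d.snd) →
      ∀ z ∈ w.support, P z := by
  intro x y w
  induction w with
  | nil => intro hx _ z hz; simp at hz; subst hz; exact hx
  | @cons u u' y h p ih =>
      intro hx hd z hz
      rw [SimpleGraph.Walk.support_cons] at hz
      rcases List.mem_cons.mp hz with rfl | hz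
      · exact hx
      · have hu' : P u' := hd ⟨(u, u'), h⟩
          (by rw [SimpleGraph.Walk.darts_cons]; exact List.mem_cons_self) hx
        exact ih hu'
          (fun d hdm => hd d
            (by rw [SimpleGraph.Walk.darts_cons]; exact List.mem_cons_of_mem _ hdm))
          z hz

private lemma dropLast_cons_eq {α : Type*} (x : α) (l : List α) (hne : l ≠ []) :
    (x :: l).dropLast = x :: l.dropLast := by
  cases l with
  | nil => exact absurd rfl hne
  | cons a t => simp

private lemma dropLast_cons_toFinset {α : Type*} [DecidableEq α] (x : α) (l : List α)
    (hne : l ≠ []) (hlast : l.getLast hne = x) :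
    (x :: l).dropLast.toFinset = l.toFinset := by
  have h2 : l.dropLast ++ [x] = l := by
    conv_rhs => rw [← List.dropLast_append_getLast hne, hlast]
  rw [dropLast_cons_eq x l hne]
  conv_rhs => rw [← h2]
  ext y
  simp [or_comm]

private lemma dropLast_cons_nodup {α : Type*} (x : α) (l : List α)
    (hne : l ≠ []) (hlast : l.getLast hne = x) (hnd : l.Nodup) :
    (x :: l).dropLast.Nodup := by
  have h2 : l.dropLast ++ [x] = l := by
    conv_rhs => rw [← List.dropLast_append_getLast hne, hlast]
  rw [dropLast_cons_eq x l hne]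
  have hnd' : (l.dropLast ++ [x]).Nodup := by rw [h2]; exact hnd
  rw [List.nodup_append] at hnd'
  exact List.nodup_cons.mpr ⟨fun hv => hnd'.2.2 x hv x (by simp) rfl, hnd'.1⟩

/-- The graph `H_{n,k,a}` (vertices partitioned into `A, B, C` with `|A| = a`,
`|B| = n-k+a`, `|C| = k-2a`; edges all pairs between `A` and `B` together with all pairs
inside `A ∪ C`) contains no cycle of length `k` or more, for `n ≥ k ≥ 4`, `1 ≤ a < k/2`. -/
theorem stmt_9 {V : Type*} [Fintype V] [DecidableEq V]
    (G : SimpleGraph V) (n k a : ℕ)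
    (hnk : k ≤ n) (hk : 4 ≤ k) (ha1 : 1 ≤ a) (ha2 : 2 * a < k)
    (A B C : Finset V)
    (hAB : Disjoint A B) (hAC : Disjoint A C) (hBC : Disjoint B C)
    (hunion : A ∪ B ∪ C = Finset.univ)
    (hA : A.card = a) (hB : B.card = n - k + a) (hC : C.card = k - 2 * a)
    (hadj : ∀ x y : V, G.Adj x y ↔ x ≠ y ∧
      ((x ∈ A ∧ y ∈ B) ∨ (x ∈ B ∧ y ∈ A) ∨ (x ∈ A ∪ C ∧ y ∈ A ∪ C))) :
    ¬ ∃ (v : V) (c : G.Walk v v), c.IsCycle ∧ k ≤ c.length := by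
  rintro ⟨v, c, hc, hlen⟩
  classical
  set l : List V := c.support.tail with hl
  have hnd : l.Nodup := hc.support_nodup
  have h3 := hc.three_le_length
  have hsl : c.support.length = c.length + 1 := c.length_support
  have hsupp : c.support = v :: l := by rw [hl]; exact c.support_eq_cons
  have hlne : l ≠ [] := by
    intro h
    have h1 : c.support.length = 1 := by rw [hsupp, h]; rfl
    omega
  have hlast : l.getLast hlne = v :=
    (List.getLast_tail (l := c.support) hlne).trans c.getLast_support
  set S : Finset V := l.toFinset with hS
  have hScard : S.card = c.length := by
    rw [hS, List.toFinset_card_of_nodup hnd]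
    rw [hsupp] at hsl
    simp only [List.length_cons] at hsl
    omega
  have hdrop : c.support.dropLast.toFinset = S := by
    rw [hsupp]; exact dropLast_cons_toFinset v l hlne hlast
  have hdropnd : c.support.dropLast.Nodup := by
    rw [hsupp]; exact dropLast_cons_nodup v l hlne hlast hnd
  have hmapsnd : c.darts.map (·.snd) = l := by rw [hl]; exact c.map_snd_darts
  have hmapfst : c.darts.map (·.fst) = c.support.dropLast := c.map_fst_darts
  have hsndnd : (c.darts.map (·.snd)).Nodup := by rw [hmapsnd]; exact hnd
  have hfstnd : (c.darts.map (·.fst)).Nodup := by rw [hmapfst]; exact hdropnd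
  -- adjacency consequences
  have adjBA : ∀ x y : V, G.Adj x y → y ∈ B → x ∈ A := by
    intro x y hxy hyB
    rcases (hadj x y).mp hxy with ⟨-, ⟨hxA, -⟩ | ⟨-, hyA⟩ | ⟨-, hyAC⟩⟩
    · exact hxA
    · exact absurd hyA (Finset.disjoint_right.mp hAB hyB)
    · rcases Finset.mem_union.mp hyAC with h | h
      · exact absurd h (Finset.disjoint_right.mp hAB hyB)
      · exact absurd h (Finset.disjoint_left.mp hBC hyB)
  have adjCA : ∀ x y : V, G.Adj x y → x ∈ C → y ∉ C → y ∈ A := by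
    intro x y hxy hxC hyC
    rcases (hadj x y).mp hxy with ⟨-, ⟨hxA, -⟩ | ⟨hxB, -⟩ | ⟨-, hyAC⟩⟩
    · exact absurd hxA (Finset.disjoint_right.mp hAC hxC)
    · exact (Finset.disjoint_left.mp hBC hxB hxC).elim
    · rcases Finset.mem_union.mp hyAC with h | h
      · exact h
      · exact absurd h hyC
  -- counting
  set b : ℕ := (S ∩ B).card with hb
  have filtB : (S.filter (· ∈ B)) = S ∩ B := by
    simpa using (Finset.filter_mem_eq_inter (s := S) (t := B))
  have key1 : ((c.darts.filter (fun d => d.snd ∈ B)).map (·.snd)) = l.filter (· ∈ B) := by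
    rw [← hmapsnd, List.filter_map]
    rfl
  have keyf : ((c.darts.filter (fun d => d.fst ∈ B)).map (·.fst))
      = c.support.dropLast.filter (· ∈ B) := by
    rw [← hmapfst, List.filter_map]
    rfl
  have len1 : (c.darts.filter (fun d => d.snd ∈ B)).length = b := by
    have h := congrArg List.length key1
    rw [List.length_map] at h
    rw [h, ← List.toFinset_card_of_nodup (hnd.filter _), List.toFinset_filter, hb, ← hS]
    congr 1
    simpa using filtB
  have len2 : (c.darts.filter (fun d => d.fst ∈ B)).length = b := by
    have h := congrArg List.length keyf
    rw [List.length_map] at h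
    rw [h, ← List.toFinset_card_of_nodup (hdropnd.filter _), List.toFinset_filter, hdrop, hb]
    congr 1
    simpa using filtB
  set T1 : Finset V := ((c.darts.filter (fun d => d.snd ∈ B)).map (·.fst)).toFinset with hT1
  set T2 : Finset V := ((c.darts.filter (fun d => d.fst ∈ B)).map (·.snd)).toFinset with hT2
  have hT1nd : ((c.darts.filter (fun d => d.snd ∈ B)).map (·.fst)).Nodup :=
    hfstnd.sublist (List.Sublist.map _ List.filter_sublist)
  have hT2nd : ((c.darts.filter (fun d => d.fst ∈ B)).map (·.snd)).Nodup :=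
    hsndnd.sublist (List.Sublist.map _ List.filter_sublist)
  have hT1card : T1.card = b := by
    rw [hT1, List.toFinset_card_of_nodup hT1nd, List.length_map, len1]
  have hT2card : T2.card = b := by
    rw [hT2, List.toFinset_card_of_nodup hT2nd, List.length_map, len2]
  have hfstS : ∀ d ∈ c.darts, d.fst ∈ S := by
    intro d hd
    rw [← hdrop, List.mem_toFinset, ← hmapfst]
    exact List.mem_map_of_mem hd
  have hsndS : ∀ d ∈ c.darts, d.snd ∈ S := by
    intro d hd
    rw [hS, List.mem_toFinset, ← hmapsnd]
    exact List.mem_map_of_mem hd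
  have hT1sub : T1 ⊆ S ∩ A := by
    intro x hx
    rw [hT1, List.mem_toFinset] at hx
    rcases List.mem_map.mp hx with ⟨d, hd, rfl⟩
    rw [List.mem_filter] at hd
    exact Finset.mem_inter.mpr ⟨hfstS d hd.1, adjBA _ _ d.adj (by simpa using hd.2)⟩
  have hT2sub : T2 ⊆ S ∩ A := by
    intro x hx
    rw [hT2, List.mem_toFinset] at hx
    rcases List.mem_map.mp hx with ⟨d, hd, rfl⟩
    rw [List.mem_filter] at hd
    exact Finset.mem_inter.mpr ⟨hsndS d hd.1, adjBA _ _ d.adj.symm (by simpa using hd.2)⟩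
  have hSA : (S ∩ A).card ≤ a := by
    rw [← hA]; exact Finset.card_le_card Finset.inter_subset_right
  have hSC : (S ∩ C).card ≤ k - 2 * a := by
    rw [← hC]; exact Finset.card_le_card Finset.inter_subset_right
  have hbSA : b ≤ (S ∩ A).card := hT1card ▸ Finset.card_le_card hT1sub
  have hpart : S.card = (S ∩ A).card + (S ∩ B).card + (S ∩ C).card := by
    have e1 : S = (S ∩ A) ∪ (S ∩ B) ∪ (S ∩ C) := by
      rw [← Finset.inter_union_distrib_left, ← Finset.inter_union_distrib_left, hunion,
        Finset.inter_univ]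
    have d1 : Disjoint (S ∩ A) (S ∩ B) :=
      hAB.mono Finset.inter_subset_right Finset.inter_subset_right
    have d2 : Disjoint ((S ∩ A) ∪ (S ∩ B)) (S ∩ C) := by
      refine Finset.disjoint_union_left.mpr ⟨?_, ?_⟩
      · exact hAC.mono Finset.inter_subset_right Finset.inter_subset_right
      · exact hBC.mono Finset.inter_subset_right Finset.inter_subset_right
    conv_lhs => rw [e1]
    rw [Finset.card_union_of_disjoint d2, Finset.card_union_of_disjoint d1]
  have hkS : k ≤ S.card := by rw [hScard]; exact hlen
  have hSAa : (S ∩ A).card = a := by omega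
  have hSCc : (S ∩ C).card = k - 2 * a := by omega
  have hT2eq : T2 = S ∩ A := Finset.eq_of_subset_of_card_le hT2sub (by omega)
  -- darts from C stay in C
  have hCstay : ∀ d ∈ c.darts, d.fst ∈ C → d.snd ∈ C := by
    intro d hd hdC
    by_contra hnC
    have hsA : d.snd ∈ A := adjCA _ _ d.adj hdC hnC
    have hmem : d.snd ∈ T2 := by
      rw [hT2eq]; exact Finset.mem_inter.mpr ⟨hsndS d hd, hsA⟩
    rw [hT2, List.mem_toFinset] at hmem
    rcases List.mem_map.mp hmem with ⟨d', hd', hsnd⟩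
    rw [List.mem_filter] at hd'
    have hdd : d' = d := List.inj_on_of_nodup_map hsndnd hd'.1 hd hsnd
    rw [hdd] at hd'
    exact Finset.disjoint_left.mp hBC (by simpa using hd'.2) hdC
  -- pick a C vertex on the cycle and rotate
  have hCne : (S ∩ C).Nonempty := by
    rw [← Finset.card_pos, hSCc]; omega
  obtain ⟨c0, hc0⟩ := hCne
  have hc0C : c0 ∈ C := (Finset.mem_inter.mp hc0).2
  have hc0l : c0 ∈ l := by
    have := (Finset.mem_inter.mp hc0).1
    rwa [hS, List.mem_toFinset] at this
  have hc0supp : c0 ∈ c.support := by rw [hsupp]; exact List.mem_cons_of_mem _ hc0l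
  have hallC : ∀ z ∈ (c.rotate c0 hc0supp).support, z ∈ C := by
    refine walk_stay (· ∈ C) (c.rotate c0 hc0supp) hc0C ?_
    intro d hd
    exact hCstay d ((c.rotate_darts c0 hc0supp).mem_iff.mp hd)
  have hAne : (S ∩ A).Nonempty := by rw [← Finset.card_pos, hSAa]; omega
  obtain ⟨xa, hxa⟩ := hAne
  have hxaA : xa ∈ A := (Finset.mem_inter.mp hxa).2
  have hxal : xa ∈ l := by
    have := (Finset.mem_inter.mp hxa).1
    rwa [hS, List.mem_toFinset] at this
  have hxasupp : xa ∈ (c.rotate c0 hc0supp).support := by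
    have hxl : xa ∈ c.support.tail := by rw [← hl]; exact hxal
    have : xa ∈ (c.rotate c0 hc0supp).support.tail :=
      (c.support_rotate c0 hc0supp).mem_iff.mpr hxl
    exact List.mem_of_mem_tail this
  exact Finset.disjoint_left.mp hAC hxaA (hallC xa hxasupp)
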